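/- Let n ∈ ℕ, 0 < p < ∞, and let ℓ_{p,∞}ⁿ carry the quasi-norm ‖x‖ = sup_{1≤i≤n} i^{1/p} x_i*, where (x_i*) is the non-increasing rearrangement. If α ≥ 0, β is defined by 1/β = α + 1/p, and D_α(x)_i = (2^m/i)^α x_i on sequences of length 2^m, then for every z in the unit ball of ℓ_{p,∞}^{2^m}, the sequence (i^{-α} z_i)_{i=1}^{2^m} has ℓ_{β,∞}-quasi-norm at most 2^{1/β}. -/

import Mathlib

open Real Finset

noncomputable def decRearrange {n : ℕ} (x : Fin n → ℝ) : Fin n → ℝ :=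
  fun k => |x (Tuple.sort (fun j => |x j|) k.rev)|

lemma decRearrange_nonneg' {n : ℕ} (x : Fin n → ℝ) (k : Fin n) : 0 ≤ decRearrange x k :=
  abs_nonneg _

lemma decRearrange_antitone' {n : ℕ} (x : Fin n → ℝ) : Antitone (decRearrange x) := by
  intro a b hab
  exact Tuple.monotone_sort (fun j => |x j|) (Fin.rev_le_rev.mpr hab)

lemma card_lt_decRearrange' {n : ℕ} (x : Fin n → ℝ) (k : Fin n) :
    ({j | decRearrange x k < |x j|} : Finset (Fin n)).card ≤ (k : ℕ) := by
  classical
  set σ := Tuple.sort (fun j => |x j|)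
  have hmono := Tuple.monotone_sort (fun j => |x j|)
  have hsub : ({j | decRearrange x k < |x j|} : Finset (Fin n)) ⊆
      ({j | k.rev < σ.symm j} : Finset (Fin n)) := by
    intro j hj
    simp only [Finset.mem_filter, Finset.mem_univ, true_and] at *
    by_contra hc
    push_neg at hc
    have : |x (σ (σ.symm j))| ≤ |x (σ k.rev)| := hmono hc
    rw [Equiv.apply_symm_apply] at this
    exact absurd hj (not_lt.mpr this)
  refine (Finset.card_le_card hsub).trans ?_
  have h1 : ({j | k.rev < σ.symm j} : Finset (Fin n)).card
      = ({j : Fin n | k.rev < j} : Finset (Fin n)).card := by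
    apply Finset.card_nbij (fun j => σ.symm j)
    · intro a ha; simpa using by simpa using ha
    · intro a ha b hb hab; exact σ.symm.injective hab
    · intro b hb
      refine ⟨σ b, ?_, by simp⟩
      simpa using hb
  rw [h1]
  have h2 : ({j : Fin n | k.rev < j} : Finset (Fin n)) = Finset.Ioi k.rev := by
    ext j; simp
  rw [h2, Fin.card_Ioi]
  simp [Fin.rev]
  omega

lemma decRearrange_le_of_card' {n : ℕ} (x : Fin n → ℝ) (i : Fin n) (t : ℝ)
    (h : ({j | t < |x j|} : Finset (Fin n)).card ≤ (i : ℕ)) :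
    decRearrange x i ≤ t := by
  classical
  by_contra hc
  push_neg at hc
  set σ := Tuple.sort (fun j => |x j|)
  have hinj : Function.Injective (fun k : Fin n => σ k.rev) := by
    intro a b hab
    simpa using σ.injective hab
  have hsub : (Finset.Iic i).image (fun k => σ k.rev) ⊆
      ({j | t < |x j|} : Finset (Fin n)) := by
    intro j hj
    simp only [Finset.mem_image, Finset.mem_Iic] at hj
    obtain ⟨k, hk, rfl⟩ := hj
    have : decRearrange x i ≤ decRearrange x k := decRearrange_antitone' x hk
    simp only [Finset.mem_filter, Finset.mem_univ, true_and]
    exact lt_of_lt_of_le hc this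
  have := Finset.card_le_card hsub
  rw [Finset.card_image_of_injective _ hinj, Fin.card_Iic] at this
  omega


theorem stmt_14 (m : ℕ) (p α β : ℝ) (hp : 0 < p) (hα : 0 ≤ α) (hβ : 1 / β = α + 1 / p)
    (z : Fin (2 ^ m) → ℝ)
    (hz : ∀ i : Fin (2 ^ m), ((i : ℕ) + 1 : ℝ) ^ (1 / p) * decRearrange z i ≤ 1) :
    ∀ i : Fin (2 ^ m),
      ((i : ℕ) + 1 : ℝ) ^ (1 / β) *
        decRearrange (fun j : Fin (2 ^ m) => ((j : ℕ) + 1 : ℝ) ^ (-α) * z j) i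
      ≤ (2 : ℝ) ^ (1 / β) := by
  intro i
  classical
  have hβpos : 0 < 1 / β := by
    rw [hβ]; positivity
  set w : Fin (2 ^ m) → ℝ := fun j => ((j : ℕ) + 1 : ℝ) ^ (-α) * z j with hw
  have hk_lt : (i : ℕ) / 2 < 2 ^ m := lt_of_le_of_lt (Nat.div_le_self _ _) i.isLt
  set k : Fin (2 ^ m) := ⟨(i : ℕ) / 2, hk_lt⟩ with hkdef
  have hkpos : (0 : ℝ) < ((k : ℕ) + 1 : ℝ) := by positivity
  have hzk : 0 ≤ decRearrange z k := decRearrange_nonneg' z k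
  set t : ℝ := ((k : ℕ) + 1 : ℝ) ^ (-α) * decRearrange z k with ht
  -- Step 1: decRearrange w i ≤ t
  have hsub : ({j | t < |w j|} : Finset (Fin (2 ^ m))) ⊆
      ({j | (j : ℕ) < (k : ℕ)} : Finset (Fin (2 ^ m))) ∪
      ({j | decRearrange z k < |z j|} : Finset (Fin (2 ^ m))) := by
    intro j hj
    simp only [Finset.mem_filter, Finset.mem_univ, true_and] at hj
    simp only [Finset.mem_union, Finset.mem_filter, Finset.mem_univ, true_and]
    by_contra hc
    push_neg at hc
    obtain ⟨h1, h2⟩ := hc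
    have hjk : ((k : ℕ) + 1 : ℝ) ≤ ((j : ℕ) + 1 : ℝ) := by
      exact_mod_cast Nat.succ_le_succ h1
    have hpow : ((j : ℕ) + 1 : ℝ) ^ (-α) ≤ ((k : ℕ) + 1 : ℝ) ^ (-α) :=
      Real.rpow_le_rpow_of_nonpos hkpos hjk (neg_nonpos.mpr hα)
    have hwj : |w j| = ((j : ℕ) + 1 : ℝ) ^ (-α) * |z j| := by
      rw [show w j = ((j : ℕ) + 1 : ℝ) ^ (-α) * z j from rfl, abs_mul,
        abs_of_nonneg (Real.rpow_nonneg (by positivity) _)]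
    have hle : |w j| ≤ t := by
      rw [hwj, ht]
      exact mul_le_mul hpow h2 (abs_nonneg _) (Real.rpow_nonneg (le_of_lt hkpos) _)
    exact absurd hj (not_lt.mpr hle)
  have hcard : ({j | t < |w j|} : Finset (Fin (2 ^ m))).card ≤ (i : ℕ) := by
    refine (Finset.card_le_card hsub).trans ?_
    refine (Finset.card_union_le _ _).trans ?_
    have h1 : ({j | (j : ℕ) < (k : ℕ)} : Finset (Fin (2 ^ m))).card ≤ (k : ℕ) := by
      have he : ({j | (j : ℕ) < (k : ℕ)} : Finset (Fin (2 ^ m))) = Finset.Iio k := by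
        ext j; simp [Fin.lt_def, -Fin.val_fin_lt]
      rw [he, Fin.card_Iio]
    have h2 := card_lt_decRearrange' z k
    have h3 : (k : ℕ) = (i : ℕ) / 2 := rfl
    omega
  have hstep1 : decRearrange w i ≤ t := decRearrange_le_of_card' w i t hcard
  -- Step 2
  have hstep2 : decRearrange z k ≤ ((k : ℕ) + 1 : ℝ) ^ (-(1 / p)) := by
    have h := hz k
    rw [Real.rpow_neg (le_of_lt hkpos)]
    rw [show (((k : ℕ) + 1 : ℝ) ^ (1 / p))⁻¹ = (((k : ℕ) + 1 : ℝ) ^ (1 / p))⁻¹ * 1 by ring,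
      le_inv_mul_iff₀ (by positivity)]
    exact h
  -- Combine
  have htle : t ≤ ((k : ℕ) + 1 : ℝ) ^ (-(1 / β)) := by
    rw [ht]
    calc ((k : ℕ) + 1 : ℝ) ^ (-α) * decRearrange z k
        ≤ ((k : ℕ) + 1 : ℝ) ^ (-α) * (((k : ℕ) + 1 : ℝ) ^ (-(1 / p))) :=
          mul_le_mul_of_nonneg_left hstep2 (Real.rpow_nonneg (le_of_lt hkpos) _)
      _ = ((k : ℕ) + 1 : ℝ) ^ (-(1 / β)) := by
          rw [← Real.rpow_add hkpos, hβ]; ring_nf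
  have hdw : 0 ≤ decRearrange w i := decRearrange_nonneg' w i
  calc ((i : ℕ) + 1 : ℝ) ^ (1 / β) * decRearrange w i
      ≤ ((i : ℕ) + 1 : ℝ) ^ (1 / β) * (((k : ℕ) + 1 : ℝ) ^ (-(1 / β))) := by
        exact mul_le_mul_of_nonneg_left (hstep1.trans htle) (Real.rpow_nonneg (by positivity) _)
    _ = ((((i : ℕ) + 1 : ℝ)) / (((k : ℕ) + 1 : ℝ))) ^ (1 / β) := by
        rw [Real.rpow_neg (le_of_lt hkpos), Real.div_rpow (by positivity) (le_of_lt hkpos),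
          div_eq_mul_inv]
        ring
    _ ≤ (2 : ℝ) ^ (1 / β) := by
        apply Real.rpow_le_rpow (by positivity) _ (le_of_lt hβpos)
        rw [div_le_iff₀ hkpos]
        have h3 : (k : ℕ) = (i : ℕ) / 2 := rfl
        have h4 : (i : ℕ) + 1 ≤ 2 * ((k : ℕ) + 1) := by omega
        exact_mod_cast h4
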